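/- There exist unique Σ₁, …, Σ_{n−1} ∈ R satisfying n·f(x)·g(x) = ((x+1)^n + Σ_{i=1}^{n−1} (−1)^i Σ_i (x+1)^{n−i}) − (x^n + Σ_{i=1}^{n−1} (−1)^i Σ_i x^{n−i}) in R[x]; setting Σ_n = S and defining G₁, …, G_{n−1} ∈ R by n·f(x−1)·g(x) = n·x^{n−1} + Σ_{i=1}^{n−1} G_i x^{n−1−i}, the elements G₁, …, G_{n−1}, Σ₁, …, Σ_n generate R as a ℂ-algebra. -/

import Mathlib

set_option synthInstance.maxHeartbeats 1000000
set_option maxHeartbeats 1000000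

noncomputable section

open Polynomial

/-- The polynomial ring `R = ℂ[f₁, …, f_l, g₁, …, g_{n−l−1}, S]` in `n` indeterminates. -/
abbrev Rring (n l : ℕ) := MvPolynomial (Fin l ⊕ Fin (n - l - 1) ⊕ Unit) ℂ

/-- `f(x) = x^l + Σ_{i=1}^l f_i x^{l−i} ∈ R[x]`. -/
def fpol (n l : ℕ) : Polynomial (Rring n l) :=
  X ^ l + ∑ i : Fin l, C (MvPolynomial.X (Sum.inl i)) * X ^ (l - 1 - (i : ℕ))

/-- `g(x) = x^{n−l−1} + Σ_{i=1}^{n−l−1} g_i x^{n−l−1−i} ∈ R[x]`. -/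
def gpol (n l : ℕ) : Polynomial (Rring n l) :=
  X ^ (n - l - 1) + ∑ i : Fin (n - l - 1), C (MvPolynomial.X (Sum.inr (Sum.inl i))) * X ^ (n - l - 2 - (i : ℕ))

/-- The last indeterminate `S` of `R`. -/
def Svar (n l : ℕ) : Rring n l := MvPolynomial.X (Sum.inr (Sum.inr ()))

/-- The defining identity for `Σ₁, …, Σ_{n−1} ∈ R`:
`n·f(x)·g(x) = ((x+1)^n + Σ_{i=1}^{n−1} (−1)^i Σ_i (x+1)^{n−i}) − (x^n + Σ_{i=1}^{n−1} (−1)^i Σ_i x^{n−i})`. -/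
def sigmaEq (n l : ℕ) (Sig : Fin (n - 1) → Rring n l) : Prop :=
  (n : Polynomial (Rring n l)) * fpol n l * gpol n l =
    ((X + 1) ^ n + ∑ i : Fin (n - 1), C ((-1 : Rring n l) ^ ((i : ℕ) + 1) * Sig i) * (X + 1) ^ (n - ((i : ℕ) + 1)))
    - (X ^ n + ∑ i : Fin (n - 1), C ((-1 : Rring n l) ^ ((i : ℕ) + 1) * Sig i) * X ^ (n - ((i : ℕ) + 1)))

/-- `G₁, …, G_{n−1} ∈ R` defined by `n·f(x−1)·g(x) = n·x^{n−1} + Σ_{i=1}^{n−1} G_i x^{n−1−i}`,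
i.e. `G_i` is the coefficient of `x^{n−1−i}` in `n·f(x−1)·g(x)`. -/
def Gelem (n l : ℕ) (i : Fin (n - 1)) : Rring n l :=
  ((n : Polynomial (Rring n l)) * (fpol n l).comp (X - 1) * gpol n l).coeff (n - 1 - ((i : ℕ) + 1))

namespace Aux

variable (n l : ℕ)

lemma fpol_monic : (fpol n l).Monic := by
  apply monic_X_pow_add
  apply lt_of_le_of_lt (degree_sum_le _ _)
  rw [Finset.sup_lt_iff (by exact_mod_cast WithBot.bot_lt_coe l)]
  intro i _
  refine lt_of_le_of_lt (degree_C_mul_X_pow_le _ _) ?_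
  have : (l - 1 - (i:ℕ)) < l := by have := i.2; omega
  exact_mod_cast this

lemma gpol_monic : (gpol n l).Monic := by
  apply monic_X_pow_add
  apply lt_of_le_of_lt (degree_sum_le _ _)
  rw [Finset.sup_lt_iff (by exact_mod_cast WithBot.bot_lt_coe (n - l - 1))]
  intro i _
  refine lt_of_le_of_lt (degree_C_mul_X_pow_le _ _) ?_
  have : (n - l - 2 - (i:ℕ)) < n - l - 1 := by
    have := i.2; omega
  exact_mod_cast this

lemma fpol_degree : (fpol n l).degree = l := by
  rw [fpol]
  rw [degree_add_eq_left_of_degree_lt, degree_X_pow]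
  rw [degree_X_pow]
  apply lt_of_le_of_lt (degree_sum_le _ _)
  rw [Finset.sup_lt_iff (by exact_mod_cast WithBot.bot_lt_coe l)]
  intro i _
  refine lt_of_le_of_lt (degree_C_mul_X_pow_le _ _) ?_
  have : (l - 1 - (i:ℕ)) < l := by have := i.2; omega
  exact_mod_cast this

lemma gpol_degree : (gpol n l).degree = (n - l - 1 : ℕ) := by
  rw [gpol]
  rw [degree_add_eq_left_of_degree_lt, degree_X_pow]
  rw [degree_X_pow]
  apply lt_of_le_of_lt (degree_sum_le _ _)
  rw [Finset.sup_lt_iff (by exact_mod_cast WithBot.bot_lt_coe (n - l - 1))]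
  intro i _
  refine lt_of_le_of_lt (degree_C_mul_X_pow_le _ _) ?_
  have : (n - l - 2 - (i:ℕ)) < n - l - 1 := by have := i.2; omega
  exact_mod_cast this

lemma fpol_natDegree : (fpol n l).natDegree = l :=
  natDegree_eq_of_degree_eq_some (fpol_degree n l)

lemma gpol_natDegree : (gpol n l).natDegree = n - l - 1 :=
  natDegree_eq_of_degree_eq_some (gpol_degree n l)

lemma fpol_coeff_top : (fpol n l).coeff l = 1 := by
  have := (fpol_monic n l).coeff_natDegree
  rwa [fpol_natDegree] at this

lemma gpol_coeff_top : (gpol n l).coeff (n - l - 1) = 1 := by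
  have := (gpol_monic n l).coeff_natDegree
  rwa [gpol_natDegree] at this

lemma fpol_coeff_zero_of_gt {k : ℕ} (hk : l < k) : (fpol n l).coeff k = 0 :=
  coeff_eq_zero_of_natDegree_lt (by rw [fpol_natDegree]; exact hk)

lemma gpol_coeff_zero_of_gt {k : ℕ} (hk : n - l - 1 < k) : (gpol n l).coeff k = 0 :=
  coeff_eq_zero_of_natDegree_lt (by rw [gpol_natDegree]; exact hk)

lemma fpol_coeff_var (i : Fin l) :
    (fpol n l).coeff (l - 1 - (i : ℕ)) = MvPolynomial.X (Sum.inl i) := by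
  have hil : (i : ℕ) < l := i.2
  rw [fpol, coeff_add, coeff_X_pow, if_neg (by omega), finset_sum_coeff]
  rw [Finset.sum_eq_single i]
  · simp [coeff_C_mul, coeff_X_pow]
  · intro j _ hj
    rw [coeff_C_mul, coeff_X_pow, if_neg, mul_zero]
    intro h
    apply hj
    have hjl : (j : ℕ) < l := j.2
    exact Fin.ext (by omega)
  · intro h; exact absurd (Finset.mem_univ i) h
  
lemma gpol_coeff_var (i : Fin (n - l - 1)) :
    (gpol n l).coeff (n - l - 2 - (i : ℕ)) = MvPolynomial.X (Sum.inr (Sum.inl i)) := by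
  have hil : (i : ℕ) < n - l - 1 := i.2
  rw [gpol, coeff_add, coeff_X_pow, if_neg (by omega), finset_sum_coeff]
  rw [Finset.sum_eq_single i]
  · simp [coeff_C_mul, coeff_X_pow]
  · intro j _ hj
    rw [coeff_C_mul, coeff_X_pow, if_neg, mul_zero]
    intro h
    apply hj
    have hjl : (j : ℕ) < n - l - 1 := j.2
    exact Fin.ext (by omega)
  · intro h; exact absurd (Finset.mem_univ i) h

lemma comp_X_sub_one_coeff {R : Type*} [CommRing R] (p : R[X]) (i : ℕ) :
    (p.comp (X - 1)).coeff i =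
      ∑ k ∈ Finset.range (p.natDegree + 1),
        ((k + i).choose i : R) * p.coeff (k + i) * (-1 : R) ^ k := by
  have h1 : p.comp (X - 1) = taylor (-1) p := by
    rw [taylor_apply]
    congr 1
    rw [map_neg, map_one]
    ring
  rw [h1, taylor_coeff]
  rw [eval_eq_sum_range' (Nat.lt_succ_of_le (le_trans (natDegree_hasseDeriv_le p i) (Nat.sub_le _ _)))]
  refine Finset.sum_congr rfl fun k _ => ?_
  rw [hasseDeriv_coeff]

lemma coeff_mul_split1 {R : Type*} [CommRing R] [Algebra ℂ R] (A : Subalgebra ℂ R)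
    (p q : R[X]) (k i₁ : ℕ) (h1 : i₁ ≤ k)
    (hrest : ∀ i, i ≤ k → i ≠ i₁ → p.coeff i * q.coeff (k - i) ∈ A) :
    (p * q).coeff k - p.coeff i₁ * q.coeff (k - i₁) ∈ A := by
  rw [coeff_mul, Finset.Nat.sum_antidiagonal_eq_sum_range_succ_mk]
  rw [← Finset.add_sum_erase _ _ (Finset.mem_range.2 (Nat.lt_succ_of_le h1))]
  rw [add_sub_cancel_left]
  refine sum_mem fun i hi => ?_
  rw [Finset.mem_erase, Finset.mem_range] at hi
  exact hrest i (Nat.lt_succ_iff.1 hi.2) hi.1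

lemma coeff_mul_split2 {R : Type*} [CommRing R] [Algebra ℂ R] (A : Subalgebra ℂ R)
    (p q : R[X]) (k i₁ i₂ : ℕ) (h1 : i₁ ≤ k) (h2 : i₂ ≤ k) (hne : i₁ ≠ i₂)
    (hrest : ∀ i, i ≤ k → i ≠ i₁ → i ≠ i₂ → p.coeff i * q.coeff (k - i) ∈ A) :
    (p * q).coeff k - p.coeff i₁ * q.coeff (k - i₁) - p.coeff i₂ * q.coeff (k - i₂) ∈ A := by
  rw [coeff_mul, Finset.Nat.sum_antidiagonal_eq_sum_range_succ_mk]
  rw [← Finset.add_sum_erase _ _ (Finset.mem_range.2 (Nat.lt_succ_of_le h1))]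
  rw [add_sub_cancel_left]
  rw [← Finset.add_sum_erase _ _
    (Finset.mem_erase.2 ⟨Ne.symm hne, Finset.mem_range.2 (Nat.lt_succ_of_le h2)⟩)]
  rw [add_sub_cancel_left]
  refine sum_mem fun i hi => ?_
  rw [Finset.mem_erase, Finset.mem_erase, Finset.mem_range] at hi
  exact hrest i (Nat.lt_succ_iff.1 hi.2.2) hi.2.1 hi.1

lemma coeff_mul_mem {R : Type*} [CommRing R] [Algebra ℂ R] (A : Subalgebra ℂ R)
    (p q : R[X]) (k : ℕ) (hp : ∀ i, p.coeff i ∈ A) (hq : ∀ i, q.coeff i ∈ A) :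
    (p * q).coeff k ∈ A := by
  rw [coeff_mul]
  exact sum_mem fun i _ => mul_mem (hp _) (hq _)

lemma natCast_isUnit (R : Type*) [CommRing R] [Algebra ℂ R] {m : ℕ} (hm : m ≠ 0) :
    IsUnit ((m : ℕ) : R) := by
  have : ((m : ℕ) : R) = algebraMap ℂ R (m : ℂ) := by
    rw [map_natCast]
  rw [this]
  exact (isUnit_iff_ne_zero.2 (Nat.cast_ne_zero.2 hm)).map (algebraMap ℂ R)

lemma exists_unique_mulVec {R : Type*} [CommRing R] {N : ℕ} (M : Matrix (Fin N) (Fin N) R)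
    (hM : IsUnit M.det) (v : Fin N → R) : ∃! c, M.mulVec c = v := by
  refine ⟨M⁻¹.mulVec v, ?_, ?_⟩
  · show M.mulVec _ = v
    rw [Matrix.mulVec_mulVec, Matrix.mul_nonsing_inv _ hM, Matrix.one_mulVec]
  · intro c hc
    have h2 := congrArg (M⁻¹.mulVec) hc
    rwa [Matrix.mulVec_mulVec, Matrix.nonsing_inv_mul _ hM, Matrix.one_mulVec] at h2

variable {n l : ℕ}

/-- entries of the transition matrix -/
def Mentry (n : ℕ) (R : Type*) [CommRing R] (k i : ℕ) : R :=
  ((n - (i + 1)).choose k : R) - if k = n - (i + 1) then 1 else 0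

lemma Mentry_zero_of_ge (R : Type*) [CommRing R] {n k i : ℕ} (hk : n - 1 ≤ k) (hi : i < n - 1) :
    Mentry n R k i = 0 := by
  rcases eq_or_lt_of_le (show n - (i+1) ≤ k by omega) with h | h
  · rw [Mentry, ← h, Nat.choose_self, if_pos rfl]
    simp
  · rw [Mentry, Nat.choose_eq_zero_of_lt h, if_neg (by omega)]
    simp

/-- the transition matrix -/
def Mmat (n : ℕ) (R : Type*) [CommRing R] : Matrix (Fin (n-1)) (Fin (n-1)) R :=
  fun k i => Mentry n R (k : ℕ) (i : ℕ)

lemma Mmat_det_isUnit (R : Type*) [CommRing R] [Algebra ℂ R] (hn : 2 ≤ n) :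
    IsUnit (Mmat n R).det := by
  have hdet : ((Mmat n R).submatrix id Fin.revPerm).det =
      Equiv.Perm.sign (Fin.revPerm : Equiv.Perm (Fin (n-1))) * (Mmat n R).det :=
    Matrix.det_permute' _ _
  have htri : ((Mmat n R).submatrix id Fin.revPerm).BlockTriangular id := by
    intro k j hkj
    simp only [id] at hkj
    have hj : (j : ℕ) < n - 1 := j.2
    have hk : (k : ℕ) < n - 1 := k.2
    have hrev : ((Fin.revPerm j : Fin (n-1)) : ℕ) = n - 1 - ((j : ℕ) + 1) := by
      rw [Fin.revPerm_apply, Fin.val_rev]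
    show Mentry n R (k : ℕ) _ = 0
    rw [Mentry, hrev]
    have he : n - (n - 1 - ((j : ℕ) + 1) + 1) = (j : ℕ) + 1 := by omega
    rw [he]
    rcases Nat.lt_or_ge ((j : ℕ) + 1) (k : ℕ) with h | h
    · rw [Nat.choose_eq_zero_of_lt h, if_neg (by omega)]; simp
    · have : (k : ℕ) = (j : ℕ) + 1 := by omega
      rw [this, Nat.choose_self, if_pos rfl]; simp
  have hprod : ((Mmat n R).submatrix id Fin.revPerm).det =
      ∏ j : Fin (n-1), (((j : ℕ) + 1 : ℕ) : R) := by
    rw [Matrix.det_of_upperTriangular htri]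
    refine Finset.prod_congr rfl fun j _ => ?_
    have hj : (j : ℕ) < n - 1 := j.2
    show Mentry n R (j : ℕ) _ = _
    have hrev : ((Fin.revPerm j : Fin (n-1)) : ℕ) = n - 1 - ((j : ℕ) + 1) := by
      rw [Fin.revPerm_apply, Fin.val_rev]
    rw [Mentry, hrev]
    have he : n - (n - 1 - ((j : ℕ) + 1) + 1) = (j : ℕ) + 1 := by omega
    rw [he, if_neg (by omega), Nat.choose_succ_self_right]
    simp
  have hunit : IsUnit ((Mmat n R).submatrix id Fin.revPerm).det := by
    rw [hprod]
    exact Finset.prod_induction _ IsUnit (fun a b ha hb => ha.mul hb) isUnit_one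
      (fun j _ => natCast_isUnit R (Nat.succ_ne_zero _))
  rw [hdet] at hunit
  rcases Int.units_eq_one_or (Equiv.Perm.sign (Fin.revPerm : Equiv.Perm (Fin (n-1)))) with h | h <;>
    rw [h] at hunit <;> simpa using hunit

section PartA

variable (n l : ℕ)

def q0 (n l : ℕ) : Polynomial (Rring n l) :=
  (n : Polynomial (Rring n l)) * (fpol n l * gpol n l) - ((X + 1) ^ n - X ^ n)

lemma FG_monic : (fpol n l * gpol n l).Monic := (fpol_monic n l).mul (gpol_monic n l)

lemma FG_natDegree (hn : 2 ≤ n) (hl : l ≤ n - 1) : (fpol n l * gpol n l).natDegree = n - 1 := by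
  rw [(fpol_monic n l).natDegree_mul (gpol_monic n l), fpol_natDegree, gpol_natDegree]
  omega

lemma FG_coeff_top (hn : 2 ≤ n) (hl : l ≤ n - 1) :
    (fpol n l * gpol n l).coeff (n - 1) = 1 := by
  have h := (FG_monic n l).coeff_natDegree
  rwa [FG_natDegree n l hn hl] at h

lemma FG_coeff_zero (hn : 2 ≤ n) (hl : l ≤ n - 1) {k : ℕ} (hk : n - 1 < k) :
    (fpol n l * gpol n l).coeff k = 0 :=
  coeff_eq_zero_of_natDegree_lt (by rwa [FG_natDegree n l hn hl])

lemma natCast_mul_coeff {R : Type*} [CommRing R] (m : ℕ) (p : R[X]) (k : ℕ) :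
    ((m : R[X]) * p).coeff k = m * p.coeff k := by
  rw [← C_eq_natCast, coeff_C_mul]

lemma q0_coeff_hi (hn : 2 ≤ n) (hl : l ≤ n - 1) {k : ℕ} (hk : n - 1 ≤ k) :
    (q0 n l).coeff k = 0 := by
  rw [q0, coeff_sub, coeff_sub, natCast_mul_coeff, coeff_X_add_one_pow, coeff_X_pow]
  rcases eq_or_lt_of_le hk with h | h
  · have hch : n.choose (n - 1) = n := by
      rw [Nat.choose_symm (by omega : 1 ≤ n), Nat.choose_one_right]
    rw [← h, FG_coeff_top n l hn hl, hch, if_neg (by omega)]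
    ring
  · rw [FG_coeff_zero n l hn hl h]
    rcases eq_or_lt_of_le (show n ≤ k by omega) with h2 | h2
    · rw [← h2, Nat.choose_self, if_pos rfl]; ring
    · rw [Nat.choose_eq_zero_of_lt h2, if_neg (by omega)]; ring

def Evec (n l : ℕ) (i : Fin (n - 1)) : Polynomial (Rring n l) :=
  (X + 1) ^ (n - ((i : ℕ) + 1)) - X ^ (n - ((i : ℕ) + 1))

lemma Evec_coeff (i : Fin (n - 1)) (k : ℕ) :
    (Evec n l i).coeff k = Mentry n (Rring n l) k (i : ℕ) := by
  rw [Evec, Mentry, coeff_sub, coeff_X_add_one_pow, coeff_X_pow]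

lemma sigmaEq_iff (Sig : Fin (n - 1) → Rring n l) :
    sigmaEq n l Sig ↔
      (∑ i : Fin (n - 1), C ((-1 : Rring n l) ^ ((i : ℕ) + 1) * Sig i) * Evec n l i) = q0 n l := by
  rw [sigmaEq, q0]
  have hsum : (∑ i : Fin (n - 1), C ((-1 : Rring n l) ^ ((i : ℕ) + 1) * Sig i) * Evec n l i) =
      (∑ i : Fin (n - 1), C ((-1 : Rring n l) ^ ((i : ℕ) + 1) * Sig i) * (X + 1) ^ (n - ((i : ℕ) + 1)))
      - (∑ i : Fin (n - 1), C ((-1 : Rring n l) ^ ((i : ℕ) + 1) * Sig i) * X ^ (n - ((i : ℕ) + 1))) := by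
    rw [← Finset.sum_sub_distrib]
    refine Finset.sum_congr rfl fun i _ => ?_
    rw [Evec, mul_sub]
  rw [hsum]
  constructor
  · intro h; rw [mul_assoc] at h; linear_combination -h
  · intro h; rw [mul_assoc]; linear_combination -h

lemma sum_Evec_coeff (c : Fin (n - 1) → Rring n l) (k : ℕ) :
    (∑ i : Fin (n - 1), C (c i) * Evec n l i).coeff k =
      ∑ i : Fin (n - 1), Mentry n (Rring n l) k (i : ℕ) * c i := by
  rw [finset_sum_coeff]
  refine Finset.sum_congr rfl fun i _ => ?_
  rw [coeff_C_mul, Evec_coeff, mul_comm]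

lemma eq_q0_iff_mulVec (hn : 2 ≤ n) (hl : l ≤ n - 1) (c : Fin (n - 1) → Rring n l) :
    (∑ i : Fin (n - 1), C (c i) * Evec n l i) = q0 n l ↔
      (Mmat n (Rring n l)).mulVec c = fun k : Fin (n - 1) => (q0 n l).coeff (k : ℕ) := by
  constructor
  · intro h
    funext k
    have := congrArg (fun p => Polynomial.coeff p (k : ℕ)) h
    rw [sum_Evec_coeff] at this
    simpa [Matrix.mulVec, dotProduct, Mmat] using this
  · intro h
    refine Polynomial.ext fun k => ?_
    rcases Nat.lt_or_ge k (n - 1) with hk | hk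
    · have := congrFun h ⟨k, hk⟩
      simp only [Matrix.mulVec, dotProduct, Mmat] at this
      rw [sum_Evec_coeff]
      exact this
    · rw [sum_Evec_coeff, q0_coeff_hi n l hn hl hk]
      refine Finset.sum_eq_zero fun i _ => ?_
      rw [Mentry_zero_of_ge _ hk i.2, zero_mul]

lemma exists_unique_sig (hn : 2 ≤ n) (hl : l ≤ n - 1) :
    ∃! Sig : Fin (n - 1) → Rring n l, sigmaEq n l Sig := by
  have hc : ∃! c : Fin (n - 1) → Rring n l,
      (Mmat n (Rring n l)).mulVec c = fun k : Fin (n - 1) => (q0 n l).coeff (k : ℕ) :=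
    exists_unique_mulVec _ (Mmat_det_isUnit (Rring n l) hn) _
  obtain ⟨c, hc1, hc2⟩ := hc
  refine ⟨fun i => (-1 : Rring n l) ^ ((i : ℕ) + 1) * c i, ?_, ?_⟩
  · show sigmaEq n l _
    rw [sigmaEq_iff, eq_q0_iff_mulVec n l hn hl]
    have : (fun i : Fin (n-1) => (-1 : Rring n l) ^ ((i : ℕ) + 1) *
        ((-1 : Rring n l) ^ ((i : ℕ) + 1) * c i)) = c := by
      funext i
      rw [← mul_assoc, ← pow_add]
      have : Even (((i : ℕ) + 1) + ((i : ℕ) + 1)) := ⟨(i : ℕ) + 1, by ring⟩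
      rw [this.neg_one_pow, one_mul]
    rw [this]
    exact hc1
  · intro Sig hSig
    rw [sigmaEq_iff, eq_q0_iff_mulVec n l hn hl] at hSig
    have := hc2 _ hSig
    funext i
    have hi := congrFun this i
    rw [← hi, ← mul_assoc, ← pow_add]
    have hev : Even (((i : ℕ) + 1) + ((i : ℕ) + 1)) := ⟨(i : ℕ) + 1, by ring⟩
    rw [hev.neg_one_pow, one_mul]

end PartA

section PartC

variable (n l : ℕ)

lemma comp_X_sub_one_eq_taylor {R : Type*} [CommRing R] (p : R[X]) :
    p.comp (X - 1) = taylor (-1 : R) p := by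
  rw [taylor_apply]
  congr 1
  rw [map_neg, map_one]
  ring

lemma Ft_natDegree : ((fpol n l).comp (X - 1)).natDegree = l := by
  rw [comp_X_sub_one_eq_taylor, natDegree_taylor, fpol_natDegree]

lemma Ft_monic : ((fpol n l).comp (X - 1)).Monic := by
  have h : (X - 1 : Polynomial (Rring n l)) = X - C 1 := by rw [C_1]
  rw [h]
  exact (fpol_monic n l).comp_X_sub_C 1

lemma Ft_coeff_top : ((fpol n l).comp (X - 1)).coeff l = 1 := by
  have h := (Ft_monic n l).coeff_natDegree
  rwa [Ft_natDegree] at h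

lemma Ft_coeff_zero_of_gt {k : ℕ} (hk : l < k) : ((fpol n l).comp (X - 1)).coeff k = 0 :=
  coeff_eq_zero_of_natDegree_lt (by rwa [Ft_natDegree])

lemma Dp_coeff_hi {i : ℕ} (hi : l ≤ i) :
    ((fpol n l) - (fpol n l).comp (X - 1)).coeff i = 0 := by
  rw [coeff_sub]
  rcases eq_or_lt_of_le hi with h | h
  · rw [← h, fpol_coeff_top, Ft_coeff_top, sub_self]
  · rw [fpol_coeff_zero_of_gt n l h, Ft_coeff_zero_of_gt n l h, sub_self]

lemma Dp_coeff_eq (hl1 : 1 ≤ l) (i : ℕ) :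
    ((fpol n l) - (fpol n l).comp (X - 1)).coeff i =
      ((i + 1 : ℕ) : Rring n l) * (fpol n l).coeff (i + 1) -
        ∑ k ∈ Finset.range (l - 1),
          (((k + 2 + i).choose i : ℕ) : Rring n l) * (fpol n l).coeff (k + 2 + i) *
            (-1 : Rring n l) ^ (k + 2) := by
  obtain ⟨l', rfl⟩ : ∃ l', l = l' + 1 := ⟨l - 1, by omega⟩
  rw [coeff_sub, comp_X_sub_one_coeff, fpol_natDegree]
  rw [Finset.sum_range_succ', Finset.sum_range_succ']
  simp only [Nat.add_sub_cancel]
  have h0 : (((0 + i).choose i : ℕ) : Rring n (l' + 1)) * (fpol n (l' + 1)).coeff (0 + i) *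
      (-1 : Rring n (l' + 1)) ^ 0 = (fpol n (l' + 1)).coeff i := by
    simp [Nat.choose_self]
  have h1 : (((0 + 1 + i).choose i : ℕ) : Rring n (l' + 1)) * (fpol n (l' + 1)).coeff (0 + 1 + i) *
      (-1 : Rring n (l' + 1)) ^ (0 + 1) = -(((i + 1 : ℕ) : Rring n (l' + 1)) *
        (fpol n (l' + 1)).coeff (i + 1)) := by
    have : (0 + 1 + i).choose i = i + 1 := by
      rw [show 0 + 1 + i = i + 1 by omega, Nat.choose_succ_self_right]
    rw [this, show 0 + 1 + i = i + 1 by omega]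
    ring
  rw [h0, h1]
  have h2 : ∀ k ∈ Finset.range l', (((k + 1 + 1 + i).choose i : ℕ) : Rring n (l' + 1)) *
      (fpol n (l' + 1)).coeff (k + 1 + 1 + i) * (-1 : Rring n (l' + 1)) ^ (k + 1 + 1) =
      (((k + 2 + i).choose i : ℕ) : Rring n (l' + 1)) * (fpol n (l' + 1)).coeff (k + 2 + i) *
        (-1 : Rring n (l' + 1)) ^ (k + 2) := by
    intro k _
    norm_num
  rw [Finset.sum_congr rfl h2]
  ring

lemma Dp_coeff_lead (hl1 : 1 ≤ l) :
    ((fpol n l) - (fpol n l).comp (X - 1)).coeff (l - 1) = (l : Rring n l) := by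
  rw [Dp_coeff_eq n l hl1, show l - 1 + 1 = l by omega, fpol_coeff_top]
  rw [Finset.sum_eq_zero, sub_zero, mul_one]
  intro k _
  rw [fpol_coeff_zero_of_gt n l (by omega), mul_zero, zero_mul]

variable (A : Subalgebra ℂ (Rring n l))

lemma inv_nat_mul_mem {m : ℕ} (hm : m ≠ 0) {x : Rring n l}
    (h : ((m : ℕ) : Rring n l) * x ∈ A) : x ∈ A := by
  have hx : x = algebraMap ℂ (Rring n l) ((m : ℂ)⁻¹) * (((m : ℕ) : Rring n l) * x) := by
    rw [← mul_assoc, ← map_natCast (algebraMap ℂ (Rring n l)) m, ← map_mul,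
      inv_mul_cancel₀ (Nat.cast_ne_zero.2 hm), map_one, one_mul]
  rw [hx]
  exact mul_mem (A.algebraMap_mem _) h

lemma Dp_coeff_mem (i : ℕ) (h : ∀ j, i < j → (fpol n l).coeff j ∈ A) :
    ((fpol n l) - (fpol n l).comp (X - 1)).coeff i ∈ A := by
  rcases Nat.eq_zero_or_pos l with hl0 | hl1
  · subst hl0
    rw [Dp_coeff_hi n 0 (Nat.zero_le i)]
    exact zero_mem A
  · rw [Dp_coeff_eq n l hl1]
    refine sub_mem (mul_mem (natCast_mem A _) (h _ (by omega))) (sum_mem fun k _ => ?_)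
    exact mul_mem (mul_mem (natCast_mem A _) (h _ (by omega))) (by
      rcases Nat.even_or_odd (k + 2) with he | ho
      · rw [he.neg_one_pow]; exact one_mem A
      · rw [ho.neg_one_pow]; exact neg_mem (one_mem A))

lemma Dp_coeff_sub_mem (i : ℕ) (h : ∀ j, i + 1 < j → (fpol n l).coeff j ∈ A) :
    ((fpol n l) - (fpol n l).comp (X - 1)).coeff i -
      ((i + 1 : ℕ) : Rring n l) * (fpol n l).coeff (i + 1) ∈ A := by
  rcases Nat.eq_zero_or_pos l with hl0 | hl1
  · subst hl0
    rw [Dp_coeff_hi n 0 (Nat.zero_le i), zero_sub]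
    refine neg_mem (mul_mem (natCast_mem A _) ?_)
    rw [fpol_coeff_zero_of_gt n 0 (by omega)]
    exact zero_mem A
  · rw [Dp_coeff_eq n l hl1, sub_right_comm, sub_self, zero_sub]
    refine neg_mem (sum_mem fun k _ => ?_)
    exact mul_mem (mul_mem (natCast_mem A _) (h _ (by omega))) (by
      rcases Nat.even_or_odd (k + 2) with he | ho
      · rw [he.neg_one_pow]; exact one_mem A
      · rw [ho.neg_one_pow]; exact neg_mem (one_mem A))

lemma neg_one_pow_mem (k : ℕ) : (-1 : Rring n l) ^ k ∈ A := by
  rcases Nat.even_or_odd k with he | ho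
  · rw [he.neg_one_pow]; exact one_mem A
  · rw [ho.neg_one_pow]; exact neg_mem (one_mem A)

lemma FG_coeff_mem (hn : 2 ≤ n) (hl : l ≤ n - 1) (Sig : Fin (n - 1) → Rring n l)
    (hSig : sigmaEq n l Sig) (hSigA : ∀ i, Sig i ∈ A) (k : ℕ) :
    (fpol n l * gpol n l).coeff k ∈ A := by
  apply inv_nat_mul_mem n l A (show n ≠ 0 by omega)
  have h := congrArg (fun p => Polynomial.coeff p k) hSig
  rw [mul_assoc, natCast_mul_coeff] at h
  rw [h, coeff_sub, coeff_add, coeff_add, finset_sum_coeff, finset_sum_coeff,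
    coeff_X_add_one_pow, coeff_X_pow]
  refine sub_mem (add_mem (natCast_mem A _) (sum_mem fun i _ => ?_))
    (add_mem ?_ (sum_mem fun i _ => ?_))
  · rw [coeff_C_mul, coeff_X_add_one_pow]
    exact mul_mem (mul_mem (neg_one_pow_mem n l A _) (hSigA i)) (natCast_mem A _)
  · split_ifs
    · exact one_mem A
    · exact zero_mem A
  · rw [coeff_C_mul, coeff_X_pow]
    refine mul_mem (mul_mem (neg_one_pow_mem n l A _) (hSigA i)) ?_
    split_ifs
    · exact one_mem A
    · exact zero_mem A

lemma FtG_coeff_mem (hn : 2 ≤ n) (hl : l ≤ n - 1) (hGel : ∀ i, Gelem n l i ∈ A) (k : ℕ) :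
    ((fpol n l).comp (X - 1) * gpol n l).coeff k ∈ A := by
  have hFtG_natDegree : ((fpol n l).comp (X - 1) * gpol n l).natDegree = n - 1 := by
    rw [(Ft_monic n l).natDegree_mul (gpol_monic n l), Ft_natDegree, gpol_natDegree]
    omega
  rcases lt_trichotomy k (n - 1) with hk | hk | hk
  · apply inv_nat_mul_mem n l A (show n ≠ 0 by omega)
    have hi : n - 2 - k < n - 1 := by omega
    have h := hGel ⟨n - 2 - k, hi⟩
    rw [Gelem] at h
    have hk2 : n - 1 - ((n - 2 - k) + 1) = k := by omega
    rw [mul_assoc, natCast_mul_coeff, hk2] at h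
    exact h
  · subst hk
    have h := ((Ft_monic n l).mul (gpol_monic n l)).coeff_natDegree
    rw [hFtG_natDegree] at h
    rw [h]
    exact one_mem A
  · rw [coeff_eq_zero_of_natDegree_lt (by rw [hFtG_natDegree]; exact hk)]
    exact zero_mem A

lemma DpG_coeff_mem (hFG : ∀ k, (fpol n l * gpol n l).coeff k ∈ A)
    (hFtG : ∀ k, ((fpol n l).comp (X - 1) * gpol n l).coeff k ∈ A) (k : ℕ) :
    ((fpol n l - (fpol n l).comp (X - 1)) * gpol n l).coeff k ∈ A := by
  rw [sub_mul, coeff_sub]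
  exact sub_mem (hFG k) (hFtG k)

lemma main_induction (hn : 2 ≤ n) (hl : l ≤ n - 1)
    (hFG : ∀ k, (fpol n l * gpol n l).coeff k ∈ A)
    (hFtG : ∀ k, ((fpol n l).comp (X - 1) * gpol n l).coeff k ∈ A) :
    ∀ m : ℕ, (∀ k, l < m + k → (fpol n l).coeff k ∈ A) ∧
      (∀ j, n - l - 1 < m + j → (gpol n l).coeff j ∈ A) := by
  have hDpG := DpG_coeff_mem n l A hFG hFtG
  intro m
  induction m with
  | zero =>
    constructor
    · intro k hk
      rw [fpol_coeff_zero_of_gt n l (by omega)]; exact zero_mem A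
    · intro j hj
      rw [gpol_coeff_zero_of_gt n l (by omega)]; exact zero_mem A
  | succ m ih =>
    obtain ⟨hF, hG⟩ := ih
    rcases Nat.eq_zero_or_pos m with hm0 | hm1
    · subst hm0
      constructor
      · intro k hk
        rcases Nat.lt_or_ge l k with h | h
        · rw [fpol_coeff_zero_of_gt n l h]; exact zero_mem A
        · have : k = l := by omega
          rw [this, fpol_coeff_top]; exact one_mem A
      · intro j hj
        rcases Nat.lt_or_ge (n - l - 1) j with h | h
        · rw [gpol_coeff_zero_of_gt n l h]; exact zero_mem A
        · have : j = n - l - 1 := by omega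
          rw [this, gpol_coeff_top]; exact one_mem A
    · -- m ≥ 1
      by_cases hml : m ≤ l
      · -- need fc; also need gc if m ≤ n - l - 1
        by_cases hmg : m ≤ n - l - 1
        · -- both unknowns: 2x2 solve
          -- alpha : fc + gc ∈ A
          have halpha : (fpol n l).coeff (l - m) + (gpol n l).coeff (n - l - 1 - m) ∈ A := by
            have hsplit := coeff_mul_split2 A (fpol n l) (gpol n l) (n - 1 - m) (l - m) l
              (by omega) (by omega) (by omega) ?_
            · rw [show n - 1 - m - (l - m) = n - l - 1 by omega,
                show n - 1 - m - l = n - l - 1 - m by omega,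
                gpol_coeff_top, fpol_coeff_top, mul_one, one_mul] at hsplit
              have h2 := sub_mem (hFG (n - 1 - m)) hsplit
              convert h2 using 1
              ring
            · intro i hi hne1 hne2
              rcases lt_trichotomy i (l - m) with h | h | h
              · rw [gpol_coeff_zero_of_gt n l (by omega), mul_zero]; exact zero_mem A
              · exact absurd h hne1
              · rcases Nat.lt_or_ge l i with h2 | h2
                · rw [fpol_coeff_zero_of_gt n l h2, zero_mul]; exact zero_mem A
                · have h3 : i < l := by omega
                  exact mul_mem (hF i (by omega)) (hG _ (by omega))
          have hgc : (gpol n l).coeff (n - l - 1 - m) ∈ A := by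
            apply inv_nat_mul_mem n l A (show m ≠ 0 by omega)
            rcases eq_or_lt_of_le hml with heq | hlt
            · -- m = l : single unknown on d-side
              have hsplit1 := coeff_mul_split1 A (fpol n l - (fpol n l).comp (X - 1))
                (gpol n l) (n - m - 2) (l - 1) (by omega) ?_
              · rw [show n - m - 2 - (l - 1) = n - l - 1 - m by omega,
                  Dp_coeff_lead n l (by omega)] at hsplit1
                have h2 := sub_mem (hDpG (n - m - 2)) hsplit1
                convert h2 using 1
                rw [heq]
                ring
              · intro i hi hne
                rcases Nat.lt_or_ge i l with h2 | h2
                · have h3 : i < l - 1 := by omega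
                  refine mul_mem (Dp_coeff_mem n l A i (fun j hj => hF j (by omega)))
                    (hG _ (by omega))
                · rw [Dp_coeff_hi n l h2, zero_mul]; exact zero_mem A
            · -- m < l : 2x2
              have hsplit2 := coeff_mul_split2 A (fpol n l - (fpol n l).comp (X - 1))
                (gpol n l) (n - m - 2) (l - m - 1) (l - 1) (by omega) (by omega) (by omega) ?_
              · rw [show n - m - 2 - (l - m - 1) = n - l - 1 by omega,
                  show n - m - 2 - (l - 1) = n - l - 1 - m by omega,
                  gpol_coeff_top, mul_one, Dp_coeff_lead n l (by omega)] at hsplit2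
                have h3 := Dp_coeff_sub_mem n l A (l - m - 1) (fun j hj => hF j (by omega))
                rw [show l - m - 1 + 1 = l - m by omega] at h3
                -- k1 : d + l*gc ∈ A
                have k1 := sub_mem (hDpG (n - m - 2)) hsplit2
                -- k2 : (l - m)*fc + l*gc ∈ A
                have k2 := sub_mem k1 h3
                have k3 := mul_mem (natCast_mem A (l - m)) halpha
                have k4 := sub_mem k2 k3
                convert k4 using 1
                rw [Nat.cast_sub (show m ≤ l by omega)]
                ring
              · intro i hi hne1 hne2
                rcases lt_trichotomy i (l - m - 1) with h | h | h
                · rw [gpol_coeff_zero_of_gt n l (by omega), mul_zero]; exact zero_mem A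
                · exact absurd h hne1
                · rcases Nat.lt_or_ge i l with h2 | h2
                  · have h3 : i ≤ l - 2 := by omega
                    refine mul_mem (Dp_coeff_mem n l A i (fun j hj => hF j (by omega)))
                      (hG _ (by omega))
                  · rw [Dp_coeff_hi n l h2, zero_mul]; exact zero_mem A
          have hfc : (fpol n l).coeff (l - m) ∈ A := by
            have h2 := sub_mem halpha hgc
            rwa [add_sub_cancel_right] at h2
          constructor
          · intro k hk
            rcases Nat.lt_or_ge l (m + k) with h | h
            · exact hF k h
            · have : k = l - m := by omega
              rw [this]; exact hfc
          · intro j hj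
            rcases Nat.lt_or_ge (n - l - 1) (m + j) with h | h
            · exact hG j h
            · have : j = n - l - 1 - m := by omega
              rw [this]; exact hgc
        · -- f-only
          have hfc : (fpol n l).coeff (l - m) ∈ A := by
            have hsplit := coeff_mul_split1 A (fpol n l) (gpol n l) (n - 1 - m) (l - m)
              (by omega) ?_
            · rw [show n - 1 - m - (l - m) = n - l - 1 by omega, gpol_coeff_top,
                mul_one] at hsplit
              have h2 := sub_mem (hFG (n - 1 - m)) hsplit
              convert h2 using 1
              ring
            · intro i hi hne
              rcases lt_trichotomy i (l - m) with h | h | h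
              · rw [gpol_coeff_zero_of_gt n l (by omega), mul_zero]; exact zero_mem A
              · exact absurd h hne
              · have h2 : i < l := by omega
                exact mul_mem (hF i (by omega)) (hG _ (by omega))
          constructor
          · intro k hk
            rcases Nat.lt_or_ge l (m + k) with h | h
            · exact hF k h
            · have : k = l - m := by omega
              rw [this]; exact hfc
          · intro j hj
            exact hG j (by omega)
      · -- m > l
        by_cases hmg : m ≤ n - l - 1
        · have hgc : (gpol n l).coeff (n - l - 1 - m) ∈ A := by
            have hsplit := coeff_mul_split1 A (fpol n l) (gpol n l) (n - 1 - m) l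
              (by omega) ?_
            · rw [show n - 1 - m - l = n - l - 1 - m by omega, fpol_coeff_top,
                one_mul] at hsplit
              have h2 := sub_mem (hFG (n - 1 - m)) hsplit
              convert h2 using 1
              ring
            · intro i hi hne
              rcases Nat.lt_or_ge l i with h | h
              · rw [fpol_coeff_zero_of_gt n l h, zero_mul]; exact zero_mem A
              · have h2 : i < l := by omega
                exact mul_mem (hF i (by omega)) (hG _ (by omega))
          constructor
          · intro k hk
            exact hF k (by omega)
          · intro j hj
            rcases Nat.lt_or_ge (n - l - 1) (m + j) with h | h
            · exact hG j h
            · have : j = n - l - 1 - m := by omega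
              rw [this]; exact hgc
        · constructor
          · intro k hk
            exact hF k (by omega)
          · intro j hj
            exact hG j (by omega)

lemma adjoin_eq_top (hn : 2 ≤ n) (hl : l ≤ n - 1) (Sig : Fin (n - 1) → Rring n l)
    (hSig : sigmaEq n l Sig) :
    Algebra.adjoin ℂ
      ((Set.range fun i : Fin (n - 1) => Gelem n l i) ∪ Set.range Sig ∪ {Svar n l}) = ⊤ := by
  set A := Algebra.adjoin ℂ
    ((Set.range fun i : Fin (n - 1) => Gelem n l i) ∪ Set.range Sig ∪ {Svar n l}) with hA
  have hSigA : ∀ i, Sig i ∈ A := fun i =>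
    Algebra.subset_adjoin (Set.mem_union_left _ (Set.mem_union_right _ ⟨i, rfl⟩))
  have hGel : ∀ i, Gelem n l i ∈ A := fun i =>
    Algebra.subset_adjoin (Set.mem_union_left _ (Set.mem_union_left _ ⟨i, rfl⟩))
  have hS : Svar n l ∈ A :=
    Algebra.subset_adjoin (Set.mem_union_right _ rfl)
  have hFG := FG_coeff_mem n l A hn hl Sig hSig hSigA
  have hFtG := FtG_coeff_mem n l A hn hl hGel
  have hmain := main_induction n l A hn hl hFG hFtG n
  rw [eq_top_iff, ← MvPolynomial.adjoin_range_X]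
  apply Algebra.adjoin_le
  rintro x ⟨s, rfl⟩
  match s with
  | Sum.inl i =>
    have h := hmain.1 (l - 1 - (i : ℕ)) (by omega)
    rwa [fpol_coeff_var] at h
  | Sum.inr (Sum.inl j) =>
    have h := hmain.2 (n - l - 2 - (j : ℕ)) (by omega)
    rwa [gpol_coeff_var] at h
  | Sum.inr (Sum.inr ()) =>
    exact hS

end PartC

end Aux

/-- there exist unique `Σ₁, …, Σ_{n−1} ∈ R` satisfying the identity
`n·f(x)·g(x) = ((x+1)^n + Σ (−1)^i Σ_i (x+1)^{n−i}) − (x^n + Σ (−1)^i Σ_i x^{n−i})`, and,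
setting `Σ_n = S` and defining `G₁, …, G_{n−1}` by
`n·f(x−1)·g(x) = n·x^{n−1} + Σ G_i x^{n−1−i}`, the elements
`G₁, …, G_{n−1}, Σ₁, …, Σ_n` generate `R` as a ℂ-algebra. -/


theorem stmt12 (n l : ℕ) (hn : 2 ≤ n) (hl : l ≤ n - 1) :
    (∃! Sig : Fin (n - 1) → Rring n l, sigmaEq n l Sig) ∧
    (∀ Sig : Fin (n - 1) → Rring n l, sigmaEq n l Sig →
      Algebra.adjoin ℂ
        ((Set.range fun i : Fin (n - 1) => Gelem n l i) ∪ Set.range Sig ∪ {Svar n l}) = ⊤) :=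
  ⟨Aux.exists_unique_sig n l hn hl, fun Sig hSig => Aux.adjoin_eq_top n l hn hl Sig hSig⟩

end
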